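/- Let F_q be a finite field with q ≡ 1 (mod 3), ψ a nontrivial additive character, z ∈ F_q* a non-cube, and S(a) = ∑_{x∈F_q} ψ(ax³). Then S(1)S(z) + S(z)S(z²) + S(z²)S(1) = −3q. -/

import Mathlib

open Finset Polynomial

section Aux

variable {F : Type*} [Field F] [Fintype F] [DecidableEq F]

private lemma aux_card_cubes (hq : Fintype.card F % 3 = 1) (y : F) (hy : y ≠ 0)
    (c : F) (hc : c ^ 3 = y) :
    ({x : F | x ^ 3 = y} : Finset F).card = 3 := by
  classical
  have hc0 : c ≠ 0 := by
    intro h; apply hy; rw [← hc, h]; ring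
  have h3 : (3 : ℕ) ∣ Fintype.card Fˣ := by
    rw [Fintype.card_units]
    have := Fintype.card_pos (α := F)
    omega
  have : Fact (Nat.Prime 3) := ⟨by norm_num⟩
  obtain ⟨g3, hg3⟩ := exists_prime_orderOf_dvd_card 3 h3
  have hupr : IsPrimitiveRoot ((g3 : F)) 3 := by
    have h := IsPrimitiveRoot.orderOf (ζ := (g3 : F))
    rwa [orderOf_units, hg3] at h
  have hbij : ({x : F | x ^ 3 = y} : Finset F).card = (nthRootsFinset 3 (1 : F)).card := by
    refine Finset.card_bij' (fun x _ => x * c⁻¹) (fun u _ => u * c) ?_ ?_ ?_ ?_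
    · intro x hx
      simp only [Finset.mem_filter, Finset.mem_univ, true_and] at hx
      rw [mem_nthRootsFinset (by norm_num)]
      rw [mul_pow, hx, ← hc, inv_pow]
      exact mul_inv_cancel₀ (pow_ne_zero 3 hc0)
    · intro u hu
      rw [mem_nthRootsFinset (by norm_num)] at hu
      simp only [Finset.mem_filter, Finset.mem_univ, true_and]
      rw [mul_pow, hu, one_mul, hc]
    · intro x _; field_simp
    · intro u _; field_simp
  rw [hbij, hupr.card_nthRootsFinset]

end Aux

/-- For `z` a non-cube, `S(1)S(z) + S(z)S(z²) + S(z²)S(1) = −3q`. -/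
theorem sum_pairwise_products_eq_neg_three_q (F : Type*) [Field F] [Fintype F]
    (hq : Fintype.card F % 3 = 1)
    (ψ : AddChar F ℂ) (hψ : ∃ a : F, ψ a ≠ 1)
    (z : F) (hz : z ≠ 0) (hnc : ¬∃ w : F, w ^ 3 = z) :
    (∑ x : F, ψ (x ^ 3)) * (∑ x : F, ψ (z * x ^ 3)) +
      (∑ x : F, ψ (z * x ^ 3)) * (∑ x : F, ψ (z ^ 2 * x ^ 3)) +
      (∑ x : F, ψ (z ^ 2 * x ^ 3)) * (∑ x : F, ψ (x ^ 3)) =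
        -3 * (Fintype.card F : ℂ) := by
  classical
  have hcard : 1 ≤ Fintype.card F := Fintype.card_pos
  have h3dvd : (3 : ℕ) ∣ Fintype.card F - 1 := by omega
  have hζ : IsPrimitiveRoot (Complex.exp (2 * Real.pi * Complex.I / 3)) 3 :=
    Complex.isPrimitiveRoot_exp 3 (by norm_num)
  obtain ⟨χ, hχord⟩ := MulChar.exists_mulChar_orderOf F h3dvd hζ
  have hχ3 : χ ^ 3 = 1 := by rw [← hχord]; exact pow_orderOf_eq_one χ
  have hχ1 : χ ≠ 1 := by
    intro h
    rw [h, orderOf_one] at hχord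
    norm_num at hχord
  have hval3 : ∀ y : F, y ≠ 0 → χ y ^ 3 = 1 := by
    intro y hy
    rw [← χ.pow_apply' (by norm_num) y, hχ3, MulChar.one_apply (Ne.isUnit hy)]
  have hcubeval : ∀ c : F, c ≠ 0 → χ (c ^ 3) = 1 := by
    intro c hc
    rw [map_pow]; exact hval3 c hc
  have hker : ∀ y : F, y ≠ 0 → (¬∃ w : F, w ^ 3 = y) → χ y ≠ 1 := by
    intro y hy hync hyone
    obtain ⟨g, hg⟩ := IsCyclic.exists_generator (α := Fˣ)
    obtain ⟨k, hk⟩ : ∃ k : ℕ, g ^ k = Units.mk0 y hy := by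
      have h := hg (Units.mk0 y hy)
      rwa [← mem_powers_iff_mem_zpowers, Submonoid.mem_powers_iff] at h
    have hdvd1 : orderOf (χ (g : F)) ∣ 3 := orderOf_dvd_of_pow_eq_one (hval3 _ g.ne_zero)
    have hdvd2 : (3 : ℕ) ∣ orderOf (χ (g : F)) := by
      rw [← hχord]
      apply orderOf_dvd_of_pow_eq_one
      apply MulChar.ext
      intro a
      obtain ⟨m, hm⟩ : ∃ m : ℕ, g ^ m = a := by
        have h := hg a
        rwa [← mem_powers_iff_mem_zpowers, Submonoid.mem_powers_iff] at h
      rw [MulChar.pow_apply_coe, MulChar.one_apply_coe, ← hm]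
      push_cast
      rw [map_pow, ← pow_mul, mul_comm, pow_mul, pow_orderOf_eq_one, one_pow]
    have horder : orderOf (χ (g : F)) = 3 := Nat.dvd_antisymm hdvd1 hdvd2
    have hyg : y = (g : F) ^ k := by
      have h := congrArg (Units.val) hk
      push_cast at h
      rw [h]
      rfl
    have h3k : (3 : ℕ) ∣ k := by
      rw [← horder, orderOf_dvd_iff_pow_eq_one, ← map_pow, ← hyg, hyone]
    obtain ⟨m, hm⟩ := h3k
    exact hync ⟨(g : F) ^ m, by rw [← pow_mul, mul_comm, ← hm, ← hyg]⟩
  have hcount : ∀ y : F, (({x : F | x ^ 3 = y} : Finset F).card : ℂ) = 1 + χ y + χ⁻¹ y := by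
    intro y
    rcases eq_or_ne y 0 with rfl | hy
    · have h : ({x : F | x ^ 3 = (0 : F)} : Finset F) = {0} := by
        ext x
        simp [pow_eq_zero_iff (by norm_num : (3:ℕ) ≠ 0)]
      rw [h]
      simp [MulChar.map_zero]
    · by_cases hcube : ∃ c : F, c ^ 3 = y
      · obtain ⟨c, hc⟩ := hcube
        have hc0 : c ≠ 0 := by intro h; apply hy; rw [← hc, h]; ring
        rw [aux_card_cubes hq y hy c hc, ← hc, hcubeval c hc0]
        rw [MulChar.inv_apply_eq_inv', hcubeval c hc0]
        norm_num
      · have hempty : ({x : F | x ^ 3 = y} : Finset F) = ∅ := by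
          ext x
          simp only [Finset.mem_filter, Finset.mem_univ, true_and, Finset.notMem_empty,
            iff_false]
          exact fun h => hcube ⟨x, h⟩
        rw [hempty]
        set ω := χ y with hω
        have hω3 : ω ^ 3 = 1 := hval3 y hy
        have hω1 : ω ≠ 1 := hker y hy hcube
        have hωinv : χ⁻¹ y = ω ^ 2 := by
          rw [MulChar.inv_apply_eq_inv', ← hω]
          exact inv_eq_of_mul_eq_one_right (by linear_combination hω3)
        rw [hωinv]
        have hfac : (ω - 1) * (1 + ω + ω ^ 2) = 0 := by linear_combination hω3
        rcases mul_eq_zero.mp hfac with h | h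
        · exact absurd (by linear_combination h : ω = 1) hω1
        · simp only [Finset.card_empty, Nat.cast_zero]
          linear_combination -h
  have hprim : ψ.IsPrimitive :=
    AddChar.IsPrimitive.of_ne_one (by
      obtain ⟨a, ha⟩ := hψ
      intro h
      exact ha (by rw [h, AddChar.one_apply]))
  have hS : ∀ a : F, a ≠ 0 → ∑ x : F, ψ (a * x ^ 3)
      = χ⁻¹ a * gaussSum χ ψ + χ a * gaussSum χ⁻¹ ψ := by
    intro a ha
    have step1 : ∑ x : F, ψ (a * x ^ 3)
        = ∑ y : F, (({x : F | x ^ 3 = y} : Finset F).card : ℂ) * ψ (a * y) := by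
      rw [eq_comm]
      calc ∑ y : F, (({x : F | x ^ 3 = y} : Finset F).card : ℂ) * ψ (a * y)
          = ∑ y : F, ∑ x ∈ ({x : F | x ^ 3 = y} : Finset F), ψ (a * x ^ 3) := by
            refine Finset.sum_congr rfl fun y _ => ?_
            rw [Finset.sum_congr rfl (fun x hx => by
              rw [(Finset.mem_filter.mp hx).2]), Finset.sum_const, nsmul_eq_mul]
        _ = ∑ x : F, ψ (a * x ^ 3) :=
            Finset.sum_fiberwise_of_maps_to (fun x _ => Finset.mem_univ _) _
    rw [step1]
    simp_rw [hcount, add_mul, one_mul, Finset.sum_add_distrib]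
    have h0 : ∑ y : F, ψ (a * y) = 0 := by
      have h := AddChar.sum_mulShift a hprim
      rw [if_neg ha] at h
      push_cast at h
      rw [← h]
      exact Finset.sum_congr rfl fun y _ => by rw [mul_comm]
    have hne : χ a ≠ 0 := by
      intro h
      have h3 := hval3 a ha
      rw [h] at h3
      norm_num at h3
    have hkey : ∀ χ' : MulChar F ℂ, χ' a ≠ 0 →
        ∑ y : F, χ' y * ψ (a * y) = (χ' a)⁻¹ * gaussSum χ' ψ := by
      intro χ' h
      have hgs : ∑ y : F, χ' y * ψ (a * y) = gaussSum χ' (ψ.mulShift a) := by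
        simp [gaussSum, AddChar.mulShift_apply]
      have hms := gaussSum_mulShift χ' ψ (Units.mk0 a ha)
      simp only [Units.val_mk0] at hms
      rw [hgs, ← hms, ← mul_assoc, inv_mul_cancel₀ h, one_mul]
    have hne' : χ⁻¹ a ≠ 0 := by
      rw [MulChar.inv_apply_eq_inv']
      exact inv_ne_zero hne
    rw [h0, hkey χ hne, hkey χ⁻¹ hne', MulChar.inv_apply_eq_inv' χ a, inv_inv]
    ring
  have hABq : gaussSum χ ψ * gaussSum χ⁻¹ ψ = (Fintype.card F : ℂ) := by
    have h := gaussSum_mul_gaussSum_eq_card hχ1 hprim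
    have hm2 : χ (-1) ^ 2 = 1 := by
      rw [← map_pow]
      norm_num
    have hm3 : χ (-1) ^ 3 = 1 := hval3 (-1) (by norm_num)
    have hm : χ (-1) = 1 := by linear_combination hm3 - χ (-1) * hm2
    have hneg := mul_gaussSum_inv_eq_gaussSum χ⁻¹ ψ
    rw [MulChar.inv_apply_eq_inv', hm, inv_one, one_mul] at hneg
    rw [← hneg]
    exact h
  have hω3 : (χ z) ^ 3 = 1 := hval3 z hz
  have hω1 : χ z ≠ 1 := hker z hz hnc
  have hωsum : 1 + χ z + (χ z) ^ 2 = 0 := by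
    have hfac : (χ z - 1) * (1 + χ z + (χ z) ^ 2) = 0 := by linear_combination hω3
    rcases mul_eq_zero.mp hfac with h | h
    · exact absurd (by linear_combination h : χ z = 1) hω1
    · exact h
  have hz1 : χ⁻¹ z = (χ z) ^ 2 := by
    rw [MulChar.inv_apply_eq_inv']
    exact inv_eq_of_mul_eq_one_right (by linear_combination hω3)
  have hz2 : χ (z ^ 2) = (χ z) ^ 2 := by rw [map_pow]
  have hz2' : χ⁻¹ (z ^ 2) = χ z := by
    rw [map_pow, hz1]
    linear_combination (χ z) * hω3
  have S1 := hS 1 one_ne_zero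
  simp only [one_mul, map_one] at S1
  have Sz := hS z hz
  rw [hz1] at Sz
  have Sz2 := hS (z ^ 2) (pow_ne_zero 2 hz)
  rw [hz2, hz2'] at Sz2
  rw [S1, Sz, Sz2]
  linear_combination (gaussSum χ ψ ^ 2 + gaussSum χ⁻¹ ψ ^ 2 + 3 * gaussSum χ ψ * gaussSum χ⁻¹ ψ)
      * hωsum
    + (gaussSum χ ψ ^ 2 + gaussSum χ⁻¹ ψ ^ 2 + χ z * gaussSum χ ψ * gaussSum χ⁻¹ ψ) * hω3
    - 3 * hABq
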